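/- Let a/b and c/d be reduced fractions with |ad−bc| = 2. Then gcd(a+c, b+d) = 2 and gcd(a−c, b−d) = 2, and the Farey determinant of the reduced fractions (a+c)/2 / ((b+d)/2) and (a−c)/2 / ((b−d)/2) is 1. -/

import Mathlib

lemma parity_aux (x y z w : ZMod 2) (h : x*w - y*z = 0)
    (h1 : ¬(x = 0 ∧ y = 0)) (h2 : ¬(z = 0 ∧ w = 0)) :
    x + z = 0 ∧ y + w = 0 := by
  revert h h1 h2; revert x y z w; decide

/-- If |ad−bc| = 2, then gcd(a+c,b+d) = 2 = gcd(a−c,b−d) and the Farey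
determinant of the reduced fractions ((a+c)/2)/((b+d)/2) and
((a−c)/2)/((b−d)/2) is 1. -/
theorem stmt_15 (a b c d : ℤ) (hb : 0 ≤ b) (hd : 0 ≤ d)
    (hab : Int.gcd a b = 1) (hcd : Int.gcd c d = 1)
    (hF : (a*d - b*c).natAbs = 2) :
    Int.gcd (a+c) (b+d) = 2 ∧ Int.gcd (a-c) (b-d) = 2 ∧
    (((a+c)/2) * ((b-d)/2) - ((a-c)/2) * ((b+d)/2)).natAbs = 1 := by
  -- parity facts
  have hF' : a*d - b*c = 2 ∨ a*d - b*c = -2 := by omega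
  have hzm : ((a : ZMod 2)) * (d : ZMod 2) - (b : ZMod 2) * (c : ZMod 2) = 0 := by
    have : ((a*d - b*c : ℤ) : ZMod 2) = 0 := by
      rcases hF' with h | h <;> rw [h] <;> decide
    push_cast at this
    linear_combination this
  have hab' : ¬((a : ZMod 2) = 0 ∧ (b : ZMod 2) = 0) := by
    rintro ⟨h1, h2⟩
    rw [ZMod.intCast_zmod_eq_zero_iff_dvd] at h1 h2
    have : (2:ℤ) ∣ (Int.gcd a b : ℤ) := Int.dvd_coe_gcd h1 h2
    rw [hab] at this; norm_num at this
  have hcd' : ¬((c : ZMod 2) = 0 ∧ (d : ZMod 2) = 0) := by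
    rintro ⟨h1, h2⟩
    rw [ZMod.intCast_zmod_eq_zero_iff_dvd] at h1 h2
    have : (2:ℤ) ∣ (Int.gcd c d : ℤ) := Int.dvd_coe_gcd h1 h2
    rw [hcd] at this; norm_num at this
  obtain ⟨hac, hbd⟩ := parity_aux (a : ZMod 2) (b : ZMod 2) (c : ZMod 2) (d : ZMod 2)
    hzm hab' hcd'
  have h2ac : (2:ℤ) ∣ a + c := by
    have h : ((a + c : ℤ) : ZMod 2) = 0 := by push_cast; exact hac
    exact_mod_cast (ZMod.intCast_zmod_eq_zero_iff_dvd _ 2).mp h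
  have h2bd : (2:ℤ) ∣ b + d := by
    have h : ((b + d : ℤ) : ZMod 2) = 0 := by push_cast; exact hbd
    exact_mod_cast (ZMod.intCast_zmod_eq_zero_iff_dvd _ 2).mp h
  have h2ac' : (2:ℤ) ∣ a - c := by
    obtain ⟨k, hk⟩ := h2ac; exact ⟨k - c, by linarith⟩
  have h2bd' : (2:ℤ) ∣ b - d := by
    obtain ⟨k, hk⟩ := h2bd; exact ⟨k - d, by linarith⟩
  -- gcd (a+c) (b+d) = 2
  have g1 : Int.gcd (a+c) (b+d) = 2 := by
    have hdvd2 : (Int.gcd (a+c) (b+d) : ℤ) ∣ a*d - b*c := by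
      have h1 : (Int.gcd (a+c) (b+d) : ℤ) ∣ a + c := Int.gcd_dvd_left _ _
      have h2 : (Int.gcd (a+c) (b+d) : ℤ) ∣ b + d := Int.gcd_dvd_right _ _
      have : (Int.gcd (a+c) (b+d) : ℤ) ∣ (a+c)*d - (b+d)*c :=
        dvd_sub (h1.mul_right d) (h2.mul_right c)
      convert this using 1; ring
    have hle : Int.gcd (a+c) (b+d) ∣ 2 := by
      rw [← hF]
      have := Int.natAbs_dvd_natAbs.mpr hdvd2
      simpa using this
    have hge : 2 ∣ Int.gcd (a+c) (b+d) := by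
      have : (2:ℤ) ∣ (Int.gcd (a+c) (b+d) : ℤ) := Int.dvd_coe_gcd h2ac h2bd
      exact_mod_cast this
    exact Nat.dvd_antisymm hle hge
  have g2 : Int.gcd (a-c) (b-d) = 2 := by
    have hdvd2 : (Int.gcd (a-c) (b-d) : ℤ) ∣ a*d - b*c := by
      have h1 : (Int.gcd (a-c) (b-d) : ℤ) ∣ a - c := Int.gcd_dvd_left _ _
      have h2 : (Int.gcd (a-c) (b-d) : ℤ) ∣ b - d := Int.gcd_dvd_right _ _
      have : (Int.gcd (a-c) (b-d) : ℤ) ∣ (a-c)*d - (b-d)*c :=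
        dvd_sub (h1.mul_right d) (h2.mul_right c)
      convert this using 1; ring
    have hle : Int.gcd (a-c) (b-d) ∣ 2 := by
      rw [← hF]
      have := Int.natAbs_dvd_natAbs.mpr hdvd2
      simpa using this
    have hge : 2 ∣ Int.gcd (a-c) (b-d) := by
      have : (2:ℤ) ∣ (Int.gcd (a-c) (b-d) : ℤ) := Int.dvd_coe_gcd h2ac' h2bd'
      exact_mod_cast this
    exact Nat.dvd_antisymm hle hge
  refine ⟨g1, g2, ?_⟩
  obtain ⟨p, hp⟩ := h2ac
  obtain ⟨q, hq⟩ := h2bd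
  obtain ⟨r, hr⟩ := h2ac'
  obtain ⟨s, hs⟩ := h2bd'
  have e1 : (a+c)/2 = p := by rw [hp]; exact Int.mul_ediv_cancel_left p two_ne_zero
  have e2 : (b+d)/2 = q := by rw [hq]; exact Int.mul_ediv_cancel_left q two_ne_zero
  have e3 : (a-c)/2 = r := by rw [hr]; exact Int.mul_ediv_cancel_left r two_ne_zero
  have e4 : (b-d)/2 = s := by rw [hs]; exact Int.mul_ediv_cancel_left s two_ne_zero
  rw [e1, e2, e3, e4]
  have ha : a = p + r := by omega
  have hc : c = p - r := by omega
  have hbq : b = q + s := by omega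
  have hdq : d = q - s := by omega
  have key : a*d - b*c = -2*(p*s - r*q) := by
    rw [ha, hc, hbq, hdq]; ring
  omega
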